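/- If (s₁,s₂,p) ∈ Γ₃, then |s₁ − conj(s₂)·p| + |s₂ − conj(s₁)·p| ≤ 3(1 − |p|²). -/

import Mathlib

noncomputable section

/-- The closed symmetrized tridisc. -/
def Gamma3 : Set (ℂ × ℂ × ℂ) :=
  {s | ∃ z1 z2 z3 : ℂ, ‖z1‖ ≤ 1 ∧ ‖z2‖ ≤ 1 ∧ ‖z3‖ ≤ 1 ∧
    s = (z1 + z2 + z3, z1 * z2 + z2 * z3 + z3 * z1, z1 * z2 * z3)}

/-- The closed symmetrized bidisc. -/
def Gamma2 : Set (ℂ × ℂ) :=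
  {s | ∃ z1 z2 : ℂ, ‖z1‖ ≤ 1 ∧ ‖z2‖ ≤ 1 ∧ s = (z1 + z2, z1 * z2)}

variable {H : Type*} [NormedAddCommGroup H] [InnerProductSpace ℂ H] [CompleteSpace H]

/-- Evaluation of a polynomial in three variables on a triple of operators. -/
def opEval3 (S1 S2 P : H →L[ℂ] H) (q : MvPolynomial (Fin 3) ℂ) : H →L[ℂ] H :=
  (AddMonoidAlgebra.coeff q).sum fun m c => c • (S1 ^ m 0 * S2 ^ m 1 * P ^ m 2)

/-- Evaluation of a polynomial in two variables on a pair of operators. -/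
def opEval2 (S P : H →L[ℂ] H) (q : MvPolynomial (Fin 2) ℂ) : H →L[ℂ] H :=
  (AddMonoidAlgebra.coeff q).sum fun m c => c • (S ^ m 0 * P ^ m 1)

def IsGamma3Contraction (S1 S2 P : H →L[ℂ] H) : Prop :=
  Commute S1 S2 ∧ Commute S1 P ∧ Commute S2 P ∧
  ∀ q : MvPolynomial (Fin 3) ℂ,
    ‖opEval3 S1 S2 P q‖ ≤
      ⨆ w ∈ Gamma3, ‖MvPolynomial.eval ![w.1, w.2.1, w.2.2] q‖

/-- `Γ₂` is a spectral set for the commuting pair `(S, P)`. -/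
def IsGamma2Contraction (S P : H →L[ℂ] H) : Prop :=
  Commute S P ∧
  ∀ q : MvPolynomial (Fin 2) ℂ,
    ‖opEval2 S P q‖ ≤ ⨆ w ∈ Gamma2, ‖MvPolynomial.eval ![w.1, w.2] q‖

/-- The defect operator `D_P = (I - P*P)^(1/2)` of a contraction `P`. -/
def defectOp (P : H →L[ℂ] H) : H →L[ℂ] H := CFC.sqrt (1 - star P * P)

/-- The defect space `𝒟_P`, the closure of the range of `D_P`. -/
def defectSpace (P : H →L[ℂ] H) : Submodule ℂ H :=
  (LinearMap.range (defectOp P : H →ₗ[ℂ] H)).topologicalClosure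

/-- The numerical radius of a bounded operator. -/
def numRadius (A : H →L[ℂ] H) : ℝ :=
  ⨆ x : {x : H // ‖x‖ = 1}, ‖(inner ℂ (A x.1) x.1 : ℂ)‖

/-- A pair of operators is almost normal if they commute and have equal self-commutators. -/
def AlmostNormal (T1 T2 : H →L[ℂ] H) : Prop :=
  Commute T1 T2 ∧ star T1 * T1 - T1 * star T1 = star T2 * T2 - T2 * star T2

/-- A `Γ₃`-isometry: a `Γ₃`-contraction whose last entry is an isometry. -/
def IsGamma3Isometry (T1 T2 V : H →L[ℂ] H) : Prop :=
  IsGamma3Contraction T1 T2 V ∧ ∀ x, ‖V x‖ = ‖x‖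

/-- A `Γ₃`-isometric dilation of `(S1, S2, P)`, with `ι` the inclusion of `H` into the
dilation space `K`. -/
def IsGamma3IsometricDilation {K : Type*} [NormedAddCommGroup K] [InnerProductSpace ℂ K]
    [CompleteSpace K] (S1 S2 P : H →L[ℂ] H) (T1 T2 V : K →L[ℂ] K) (ι : H →ₗᵢ[ℂ] K) : Prop :=
  IsGamma3Isometry T1 T2 V ∧
  ∀ m1 m2 n : ℕ,
    ContinuousLinearMap.adjoint ι.toContinuousLinearMap ∘L
      ((T1 ^ m1 * T2 ^ m2 * V ^ n) ∘L ι.toContinuousLinearMap) = S1 ^ m1 * S2 ^ m2 * P ^ n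

end


lemma key_norm (z w : ℂ) (hw : ‖w‖ ≤ 1) :
    ‖z * (1 - (starRingEnd ℂ) w * w)‖ = ‖z‖ * (1 - ‖w‖^2) := by
  have h1 : (starRingEnd ℂ) w * w = ((‖w‖^2 : ℝ) : ℂ) := by
    rw [mul_comm, Complex.mul_conj]
    norm_cast
    simp [Complex.normSq_eq_norm_sq]
  rw [h1, norm_mul]
  have : ((1:ℂ) - ((‖w‖^2:ℝ):ℂ)) = (((1 - ‖w‖^2 : ℝ)):ℂ) := by push_cast; ring
  rw [this, Complex.norm_real, Real.norm_of_nonneg (by nlinarith [norm_nonneg w])]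

private theorem gamma3_aux (s1 s2 p : ℂ)
    (h : ∃ z1 z2 z3 : ℂ, ‖z1‖ ≤ 1 ∧ ‖z2‖ ≤ 1 ∧ ‖z3‖ ≤ 1 ∧
      (s1, s2, p) = (z1 + z2 + z3, z1 * z2 + z2 * z3 + z3 * z1, z1 * z2 * z3)) :
    ‖s1 - (starRingEnd ℂ) s2 * p‖ + ‖s2 - (starRingEnd ℂ) s1 * p‖ ≤ 3 * (1 - ‖p‖ ^ 2) := by
  obtain ⟨z1, z2, z3, h1, h2, h3, heq⟩ := h
  obtain ⟨hs1, hs2, hp⟩ : s1 = z1 + z2 + z3 ∧ s2 = z1*z2 + z2*z3 + z3*z1 ∧ p = z1*z2*z3 := by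
    simpa [Prod.ext_iff] using heq
  subst hs1 hs2 hp
  set a := ‖z1‖ with ha'
  set b := ‖z2‖ with hb'
  set c := ‖z3‖ with hc'
  have ha0 : 0 ≤ a := norm_nonneg _
  have hb0 : 0 ≤ b := norm_nonneg _
  have hc0 : 0 ≤ c := norm_nonneg _
  have hbc : ‖z2 * z3‖ ≤ 1 := by rw [norm_mul]; nlinarith
  have hca : ‖z3 * z1‖ ≤ 1 := by rw [norm_mul]; nlinarith
  have hab : ‖z1 * z2‖ ≤ 1 := by rw [norm_mul]; nlinarith
  have e1 : (z1 + z2 + z3) - (starRingEnd ℂ) (z1*z2 + z2*z3 + z3*z1) * (z1*z2*z3)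
      = z1 * (1 - (starRingEnd ℂ) (z2*z3) * (z2*z3))
      + z2 * (1 - (starRingEnd ℂ) (z3*z1) * (z3*z1))
      + z3 * (1 - (starRingEnd ℂ) (z1*z2) * (z1*z2)) := by
    simp only [map_add, map_mul]; ring
  have e2 : (z1*z2 + z2*z3 + z3*z1) - (starRingEnd ℂ) (z1 + z2 + z3) * (z1*z2*z3)
      = (z1*z2) * (1 - (starRingEnd ℂ) z3 * z3)
      + (z2*z3) * (1 - (starRingEnd ℂ) z1 * z1)
      + (z3*z1) * (1 - (starRingEnd ℂ) z2 * z2) := by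
    simp only [map_add, map_mul]; ring
  have b1 : ‖(z1 + z2 + z3) - (starRingEnd ℂ) (z1*z2 + z2*z3 + z3*z1) * (z1*z2*z3)‖
      ≤ a*(1-(b*c)^2) + b*(1-(c*a)^2) + c*(1-(a*b)^2) := by
    rw [e1]
    calc _ ≤ ‖z1 * (1 - (starRingEnd ℂ) (z2*z3) * (z2*z3))‖
        + ‖z2 * (1 - (starRingEnd ℂ) (z3*z1) * (z3*z1))‖
        + ‖z3 * (1 - (starRingEnd ℂ) (z1*z2) * (z1*z2))‖ :=
        (norm_add_le _ _).trans (by gcongr; exact norm_add_le _ _)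
      _ = a*(1-(b*c)^2) + b*(1-(c*a)^2) + c*(1-(a*b)^2) := by
        rw [key_norm _ _ hbc, key_norm _ _ hca, key_norm _ _ hab,
          norm_mul, norm_mul, norm_mul]
  have b2 : ‖(z1*z2 + z2*z3 + z3*z1) - (starRingEnd ℂ) (z1 + z2 + z3) * (z1*z2*z3)‖
      ≤ (a*b)*(1-c^2) + (b*c)*(1-a^2) + (c*a)*(1-b^2) := by
    rw [e2]
    calc _ ≤ ‖(z1*z2) * (1 - (starRingEnd ℂ) z3 * z3)‖
        + ‖(z2*z3) * (1 - (starRingEnd ℂ) z1 * z1)‖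
        + ‖(z3*z1) * (1 - (starRingEnd ℂ) z2 * z2)‖ :=
        (norm_add_le _ _).trans (by gcongr; exact norm_add_le _ _)
      _ = (a*b)*(1-c^2) + (b*c)*(1-a^2) + (c*a)*(1-b^2) := by
        rw [key_norm _ _ h3, key_norm _ _ h1, key_norm _ _ h2,
          norm_mul, norm_mul, norm_mul]
  have hpn : ‖z1*z2*z3‖ = a*b*c := by rw [norm_mul, norm_mul]
  rw [hpn]
  have habc : a*b*c ≤ 1 := mul_le_one₀ (mul_le_one₀ h1 hb0 h2) hc0 h3
  have hbc2 : b*c ≤ 1 := mul_le_one₀ h2 hc0 h3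
  have hca2 : c*a ≤ 1 := mul_le_one₀ h3 ha0 h1
  have hab2 : a*b ≤ 1 := mul_le_one₀ h1 hb0 h2
  nlinarith [b1, b2,
    mul_nonneg (mul_nonneg (sub_nonneg.2 h1) (sub_nonneg.2 hbc2)) (sub_nonneg.2 habc),
    mul_nonneg (mul_nonneg (sub_nonneg.2 h2) (sub_nonneg.2 hca2)) (sub_nonneg.2 habc),
    mul_nonneg (mul_nonneg (sub_nonneg.2 h3) (sub_nonneg.2 hab2)) (sub_nonneg.2 habc)]

theorem gamma3_abs_inequality (s1 s2 p : ℂ) (h : (s1, s2, p) ∈ Gamma3) :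
    ‖s1 - (starRingEnd ℂ) s2 * p‖ + ‖s2 - (starRingEnd ℂ) s1 * p‖ ≤ 3 * (1 - ‖p‖ ^ 2) := by
  exact gamma3_aux s1 s2 p h
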